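/- arXiv:2005.04480 — 4 statements merged into one kernel-verified Lean document; each statement's English description precedes it below -/
import Mathlib

section
/- Let m, g, Crr, CdA, ρ > 0, let λ ∈ [0, 1), and let θ ∈ (−π/2, π/2) satisfy Crr·cos θ + sin θ ≥ 0. Let 0 ≤ w₁ < w₂ be two headwind values and let V₁, V₂ > 0 be speeds such that the required powers are equal: (m·g·sin θ + Crr·m·g·cos θ + (1/2)·CdA·ρ·(V₁ + w₁)²)·V₁/(1 − λ) = (m·g·sin θ + Crr·m·g·cos θ + (1/2)·CdA·ρ·(V₂ + w₂)²)·V₂/(1 − λ). Then V₂ < V₁: at constant power, a stronger headwind results in a lower speed. -/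
/-- At constant power, a stronger headwind results in a lower speed: if
`0 ≤ w₁ < w₂` and `V₁, V₂ > 0` give equal required powers, then `V₂ < V₁`. -/
theorem stronger_headwind_lower_speed
    (m g Crr CdA ρ lam θ : ℝ)
    (hm : 0 < m) (hg : 0 < g) (hCrr : 0 < Crr) (hCdA : 0 < CdA) (hρ : 0 < ρ)
    (hlam : lam ∈ Set.Ico (0 : ℝ) 1)
    (hθ : θ ∈ Set.Ioo (-(Real.pi / 2)) (Real.pi / 2))
    (hres : 0 ≤ Crr * Real.cos θ + Real.sin θ)
    (w₁ w₂ : ℝ) (hw₁ : 0 ≤ w₁) (hw : w₁ < w₂)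
    (V₁ V₂ : ℝ) (hV₁ : 0 < V₁) (hV₂ : 0 < V₂)
    (hP : (m * g * Real.sin θ + Crr * m * g * Real.cos θ
            + (1 / 2) * CdA * ρ * (V₁ + w₁) ^ 2) * V₁ / (1 - lam)
        = (m * g * Real.sin θ + Crr * m * g * Real.cos θ
            + (1 / 2) * CdA * ρ * (V₂ + w₂) ^ 2) * V₂ / (1 - lam)) :
    V₂ < V₁ := by
  by_contra h
  push_neg at h
  have hlam1 : 0 < 1 - lam := by linarith [hlam.2]
  have hA : 0 ≤ m * g * Real.sin θ + Crr * m * g * Real.cos θ := by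
    have := mul_nonneg (mul_nonneg hm.le hg.le) hres
    nlinarith
  have hEq : (m * g * Real.sin θ + Crr * m * g * Real.cos θ
            + (1 / 2) * CdA * ρ * (V₁ + w₁) ^ 2) * V₁
        = (m * g * Real.sin θ + Crr * m * g * Real.cos θ
            + (1 / 2) * CdA * ρ * (V₂ + w₂) ^ 2) * V₂ := by
    field_simp at hP
    linarith
  have hs : V₁ + w₁ < V₂ + w₂ := by linarith
  have hsq : (V₁ + w₁) ^ 2 < (V₂ + w₂) ^ 2 := by nlinarith
  nlinarith [mul_pos hCdA hρ, mul_lt_mul_of_pos_right hsq hV₁,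
    mul_nonneg (sq_nonneg (V₂ + w₂)) (sub_nonneg.2 h),
    mul_nonneg hA (sub_nonneg.2 h)]
end

section
/- Let m, g, Crr, CdA, ρ > 0, let λ ∈ [0, 1), let w ≥ 0, and let θ₁ < θ₂ be slope angles in (−π/2, π/2) such that cos θ − Crr·sin θ > 0 for all θ ∈ [θ₁, θ₂] and Crr·cos θ₁ + sin θ₁ ≥ 0. Let V₁, V₂ > 0 be speeds such that the required powers are equal: (m·g·sin θ₁ + Crr·m·g·cos θ₁ + (1/2)·CdA·ρ·(V₁ + w)²)·V₁/(1 − λ) = (m·g·sin θ₂ + Crr·m·g·cos θ₂ + (1/2)·CdA·ρ·(V₂ + w)²)·V₂/(1 − λ). Then V₂ < V₁: at constant power, a steeper slope results in a lower speed. -/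
/-- At constant power, a steeper slope results in a lower speed: if
`θ₁ < θ₂` are slope angles in `(-π/2, π/2)` with `cos θ - Crr sin θ > 0` on
`[θ₁, θ₂]` and `Crr cos θ₁ + sin θ₁ ≥ 0`, and `V₁, V₂ > 0` give equal required
powers, then `V₂ < V₁`. -/
theorem steeper_slope_lower_speed
    (m g Crr CdA ρ lam w : ℝ)
    (hm : 0 < m) (hg : 0 < g) (hCrr : 0 < Crr) (hCdA : 0 < CdA) (hρ : 0 < ρ)
    (hlam : lam ∈ Set.Ico (0 : ℝ) 1) (hw : 0 ≤ w)
    (θ₁ θ₂ : ℝ) (hθlt : θ₁ < θ₂)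
    (hθ₁ : θ₁ ∈ Set.Ioo (-(Real.pi / 2)) (Real.pi / 2))
    (hθ₂ : θ₂ ∈ Set.Ioo (-(Real.pi / 2)) (Real.pi / 2))
    (hmono : ∀ θ ∈ Set.Icc θ₁ θ₂, 0 < Real.cos θ - Crr * Real.sin θ)
    (hres : 0 ≤ Crr * Real.cos θ₁ + Real.sin θ₁)
    (V₁ V₂ : ℝ) (hV₁ : 0 < V₁) (hV₂ : 0 < V₂)
    (hP : (m * g * Real.sin θ₁ + Crr * m * g * Real.cos θ₁
            + (1 / 2) * CdA * ρ * (V₁ + w) ^ 2) * V₁ / (1 - lam)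
        = (m * g * Real.sin θ₂ + Crr * m * g * Real.cos θ₂
            + (1 / 2) * CdA * ρ * (V₂ + w) ^ 2) * V₂ / (1 - lam)) :
    V₂ < V₁ := by
  have hlam1 : (0:ℝ) < 1 - lam := by
    have := hlam.2; linarith
  -- equality of numerators
  have hP' : (m * g * Real.sin θ₁ + Crr * m * g * Real.cos θ₁
            + (1 / 2) * CdA * ρ * (V₁ + w) ^ 2) * V₁
        = (m * g * Real.sin θ₂ + Crr * m * g * Real.cos θ₂
            + (1 / 2) * CdA * ρ * (V₂ + w) ^ 2) * V₂ := by
    field_simp at hP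
    linarith
  -- h θ = sin θ + Crr cos θ is strictly increasing on [θ₁, θ₂]
  set h : ℝ → ℝ := fun θ => Real.sin θ + Crr * Real.cos θ with hh
  have hderiv : ∀ θ : ℝ, HasDerivAt h (Real.cos θ - Crr * Real.sin θ) θ := by
    intro θ
    have := (Real.hasDerivAt_sin θ).add ((Real.hasDerivAt_cos θ).const_mul Crr)
    simpa [hh, mul_comm, sub_eq_add_neg, mul_neg, Pi.add_def] using this
  have hsm : StrictMonoOn h (Set.Icc θ₁ θ₂) := by
    apply strictMonoOn_of_deriv_pos (convex_Icc θ₁ θ₂)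
    · exact (Continuous.continuousOn (by
        simpa [hh, Pi.add_def, Pi.mul_def] using Real.continuous_sin.add (continuous_const.mul Real.continuous_cos)))
    · intro θ hθ
      have hθ' : θ ∈ Set.Icc θ₁ θ₂ := by
        rw [interior_Icc] at hθ; exact Set.mem_Icc_of_Ioo hθ
      rw [(hderiv θ).deriv]
      exact hmono θ hθ'
  have hlt : h θ₁ < h θ₂ :=
    hsm (Set.left_mem_Icc.2 hθlt.le) (Set.right_mem_Icc.2 hθlt.le) hθlt
  have hA : m * g * Real.sin θ₁ + Crr * m * g * Real.cos θ₁
      < m * g * Real.sin θ₂ + Crr * m * g * Real.cos θ₂ := by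
    have hmg : 0 < m * g := mul_pos hm hg
    simp only [hh] at hlt
    nlinarith
  have hA1 : 0 ≤ m * g * Real.sin θ₁ + Crr * m * g * Real.cos θ₁ := by
    have hmg : 0 < m * g := mul_pos hm hg
    nlinarith
  by_contra hcon
  push_neg at hcon
  have hsq : (V₁ + w) ^ 2 ≤ (V₂ + w) ^ 2 := by nlinarith
  have hc : 0 < (1/2) * CdA * ρ := by positivity
  nlinarith [mul_pos hc (pow_pos (by linarith : (0:ℝ) < V₁ + w) 2),
    mul_le_mul_of_nonneg_right hsq (le_of_lt hc)]
end

section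
/- Let V̄ > 0, w > 0, and let V_U, V_D > 0 satisfy the total-work constraint (V_U + w)² + (V_D − w)² = 2·V̄². Then the average speed satisfies 2·V_U·V_D/(V_U + V_D) < V̄: under a constraint of fixed total work, riding with the wind does not compensate for the speed lost by riding against the wind. -/
/-- Under the total-work constraint `(V_U + w)² + (V_D - w)² = 2 V̄²` with
`w > 0`, the average speed `2 V_U V_D / (V_U + V_D)` is strictly less than the
windless speed `V̄`: riding with the wind does not compensate for the speed
lost by riding against the wind. -/
theorem work_constraint_average_speed_lt
    (Vbar w VU VD : ℝ) (hVbar : 0 < Vbar) (hw : 0 < w)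
    (hVU : 0 < VU) (hVD : 0 < VD)
    (hwork : (VU + w) ^ 2 + (VD - w) ^ 2 = 2 * Vbar ^ 2) :
    2 * VU * VD / (VU + VD) < Vbar := by
  rw [div_lt_iff₀ (by positivity)]
  -- geometric mean squared is below Vbar²
  have h1 : VU * VD < Vbar ^ 2 := by nlinarith [sq_nonneg (VU - VD + w), sq_nonneg w]
  -- AM–GM style: (2 VU VD)² ≤ VU VD (VU + VD)²
  have h2 : (2 * VU * VD) ^ 2 ≤ (VU * VD) * (VU + VD) ^ 2 := by
    nlinarith [sq_nonneg (VU - VD), mul_pos hVU hVD]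
  by_contra a
  push_neg at a
  have ha : Vbar * (VU + VD) * (Vbar * (VU + VD)) ≤ 2 * VU * VD * (2 * VU * VD) :=
    mul_le_mul a a (by positivity) (by positivity)
  nlinarith [h1, h2, ha, mul_pos (add_pos hVU hVD) (add_pos hVU hVD)]
end

section
/- Let c ≥ 0, k > 0, w > 0, and V̄ > 0, and set P₀ = (c + k·V̄²)·V̄. Suppose V_U > 0 satisfies (c + k·(V_U + w)²)·V_U = P₀ and V_D > w satisfies (c + k·(V_D − w)²)·V_D = P₀. Then the average speed satisfies 2·V_U·V_D/(V_U + V_D) < V̄: under a constraint of constant power equal to the windless power, riding with the wind does not compensate for the speed lost by riding against the wind. -/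
set_option maxHeartbeats 1000000

private lemma key_ineq (v w al be : ℝ) (hv : 0 < v) (hw : 0 < w) (hal : 0 < al)
    (halw : al < w) (hbe : 0 < be) (hbew : be < w) (hbev : be < v) (hVU : w < v + al)
    (hstar : (w - be) * (al * ((2 * v + al) * (v + al - w)))
           = (w - al) * (be * ((2 * v - be) * (v + w - be)))) :
    0 < al ^ 2 + be ^ 2 + 2 * v * (al - be) := by
  rcases le_or_gt be al with h | h
  · nlinarith [mul_pos hal hal, mul_nonneg (mul_nonneg (by norm_num : (0:ℝ) ≤ 2) hv.le) (sub_nonneg.2 h)]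
  · by_contra hG
    push_neg at hG
    have h1 : al * (2 * v + al) ≤ be * (2 * v - be) := by nlinarith
    have hp : 0 < (w - be) * (v + al - w) := mul_pos (sub_pos.2 hbew) (by linarith)
    have h2 : (w - be) * (v + al - w) < (w - al) * (v + w - be) := by
      nlinarith [mul_pos (sub_pos.2 halw) (sub_pos.2 hbew), mul_pos hv (sub_pos.2 h)]
    have h3 : 0 < al * (2 * v + al) := by positivity
    nlinarith [mul_lt_mul_of_pos_left h2 h3,
      mul_le_mul_of_nonneg_right h1 (le_trans hp.le h2.le), hstar]

/-- Under the constant-power constraint: with `c ≥ 0`, `k > 0`, `w > 0`,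
`V̄ > 0` and `P₀ = (c + k V̄²) V̄`, if `V_U > 0` satisfies
`(c + k (V_U + w)²) V_U = P₀` and `V_D > w` satisfies
`(c + k (V_D - w)²) V_D = P₀`, then the average speed
`2 V_U V_D / (V_U + V_D)` is strictly less than `V̄`: riding with the wind
does not compensate for the speed lost by riding against the wind. -/
theorem power_constraint_average_speed_lt
    (c k w Vbar VU VD : ℝ) (hc : 0 ≤ c) (hk : 0 < k) (hw : 0 < w)
    (hVbar : 0 < Vbar) (hVU : 0 < VU) (hVD : w < VD)
    (hU : (c + k * (VU + w) ^ 2) * VU = (c + k * Vbar ^ 2) * Vbar)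
    (hD : (c + k * (VD - w) ^ 2) * VD = (c + k * Vbar ^ 2) * Vbar) :
    2 * VU * VD / (VU + VD) < Vbar := by
  have hVD0 : 0 < VD := hw.trans hVD
  have hP0 : 0 < (c + k * Vbar ^ 2) * Vbar := by positivity
  have mono : ∀ x y : ℝ, 0 < x → x ≤ y → (c + k * x ^ 2) * x ≤ (c + k * y ^ 2) * y := by
    intro x y hx hxy
    have h2 : (0:ℝ) ≤ x ^ 2 + x * y + y ^ 2 := by
      nlinarith [mul_pos hx (hx.trans_le hxy), sq_nonneg x, sq_nonneg y]
    nlinarith [mul_nonneg (sub_nonneg.2 hxy) hc,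
      mul_nonneg (mul_nonneg hk.le (sub_nonneg.2 hxy)) h2]
  -- Vbar < VU + w
  have hUw : Vbar < VU + w := by
    by_contra hcon
    push_neg at hcon
    have := mono (VU + w) Vbar (by linarith) hcon
    have hpos : 0 < c + k * (VU + w) ^ 2 := by positivity
    nlinarith [mul_pos hw hpos]
  -- VD - w < Vbar
  have hDw : VD - w < Vbar := by
    by_contra hcon
    push_neg at hcon
    have := mono Vbar (VD - w) hVbar hcon
    have hpos : 0 < c + k * (VD - w) ^ 2 := by
      nlinarith [mul_pos hk (mul_pos (sub_pos.2 hVD) (sub_pos.2 hVD))]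
    nlinarith [mul_pos hw hpos]
  -- VU < Vbar
  have hUb : VU < Vbar := by
    by_contra hcon
    push_neg at hcon
    have := mono Vbar VU hVbar hcon
    nlinarith [mul_pos hk (mul_pos hVU (mul_pos hw (by linarith : (0:ℝ) < 2 * VU + w)))]
  -- Vbar < VD
  have hDb : Vbar < VD := by
    by_contra hcon
    push_neg at hcon
    have := mono VD Vbar hVD0 hcon
    nlinarith [mul_pos hk (mul_pos hVD0 (mul_pos hw (by linarith : (0:ℝ) < 2 * VD - w)))]
  set al := VU + w - Vbar with hal_def
  set be := Vbar - VD + w with hbe_def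
  have hstar : (w - be) * (al * ((2 * Vbar + al) * (Vbar + al - w)))
             = (w - al) * (be * ((2 * Vbar - be) * (Vbar + w - be))) := by
    have hkstar : k * ((w - be) * (al * ((2 * Vbar + al) * (Vbar + al - w))))
                = k * ((w - al) * (be * ((2 * Vbar - be) * (Vbar + w - be)))) := by
      linear_combination (w - be) * hU + (w - al) * hD
    exact mul_left_cancel₀ (ne_of_gt hk) hkstar
  have Key : 0 < al ^ 2 + be ^ 2 + 2 * Vbar * (al - be) :=
    key_ineq Vbar w al be hVbar hw (by simp [hal_def]; linarith) (by simp [hal_def]; linarith)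
      (by simp [hbe_def]; linarith) (by simp [hbe_def]; linarith) (by simp [hbe_def]; linarith)
      (by simp [hal_def]; linarith) hstar
  -- Key says (VU+w)^2 + (VD-w)^2 > 2 Vbar^2
  have hsum : 0 < VU + VD := by linarith
  rw [div_lt_iff₀ hsum]
  have h5 : (c + k * Vbar ^ 2) * Vbar * (VU + VD)
      = (2 * c + k * ((VU + w) ^ 2 + (VD - w) ^ 2)) * (VU * VD) := by
    linear_combination (-VD) * hU + (-VU) * hD
  simp only [hal_def, hbe_def] at Key
  have hSpos : 0 < (VU + w) ^ 2 + (VD - w) ^ 2 - 2 * Vbar ^ 2 := by nlinarith [Key]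
  have h7 : (c + k * Vbar ^ 2) * Vbar * (Vbar * (VU + VD) - 2 * VU * VD)
      = (k * (Vbar * (VU * VD))) * ((VU + w) ^ 2 + (VD - w) ^ 2 - 2 * Vbar ^ 2) := by
    linear_combination Vbar * h5
  have hPX : 0 < (c + k * Vbar ^ 2) * Vbar * (Vbar * (VU + VD) - 2 * VU * VD) := by
    rw [h7]
    exact mul_pos (mul_pos hk (mul_pos hVbar (mul_pos hVU hVD0))) hSpos
  nlinarith [hPX, hP0]
end
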